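/- For every LTL formula φ and every Y ⊆ Prop: if Y ⊊ Prop(φ) (strict inclusion), then there are at least 2|Y| distinct subformulas ψ ∈ SubF(φ) in which some proposition of Y occurs, i.e., |{ψ ∈ SubF(φ) : Y ∩ Prop(ψ) ≠ ∅}| ≥ 2|Y|. -/

import Mathlib

namespace Temporal

/-- LTL formulas over a set of atomic propositions `P`. -/
inductive LTL (P : Type) : Type where
  | atom : P → LTL P
  | lnot : LTL P → LTL P
  | land : LTL P → LTL P → LTL P
  | lor : LTL P → LTL P → LTL P
  | limp : LTL P → LTL P → LTL P
  | liff : LTL P → LTL P → LTL P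
  | next : LTL P → LTL P
  | fut : LTL P → LTL P
  | glob : LTL P → LTL P
  | untl : LTL P → LTL P → LTL P
  | rel : LTL P → LTL P → LTL P
  | wuntl : LTL P → LTL P → LTL P
  | mrel : LTL P → LTL P → LTL P

variable {P : Type}

/-- Suffix `w[i:]` of an infinite word. -/
def shift (w : ℕ → Set P) (i : ℕ) : ℕ → Set P := fun n => w (n + i)

/-- The constant infinite word `α^ω`. -/
def constW (α : Set P) : ℕ → Set P := fun _ => α

/-- LTL semantics on infinite words. -/
def LTL.Sat : LTL P → (ℕ → Set P) → Prop
  | .atom p, w => p ∈ w 0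
  | .lnot φ, w => ¬ φ.Sat w
  | .land φ ψ, w => φ.Sat w ∧ ψ.Sat w
  | .lor φ ψ, w => φ.Sat w ∨ ψ.Sat w
  | .limp φ ψ, w => ¬ φ.Sat w ∨ ψ.Sat w
  | .liff φ ψ, w => (φ.Sat w ∧ ψ.Sat w) ∨ (¬ φ.Sat w ∧ ¬ ψ.Sat w)
  | .next φ, w => φ.Sat (shift w 1)
  | .fut φ, w => ∃ i, φ.Sat (shift w i)
  | .glob φ, w => ∀ i, φ.Sat (shift w i)
  | .untl φ ψ, w => ∃ i, ψ.Sat (shift w i) ∧ ∀ j < i, φ.Sat (shift w j)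
  | .rel φ ψ, w => ¬ ∃ i, ¬ ψ.Sat (shift w i) ∧ ∀ j < i, ¬ φ.Sat (shift w j)
  | .wuntl φ ψ, w =>
      (∃ i, ψ.Sat (shift w i) ∧ ∀ j < i, φ.Sat (shift w j)) ∨ ∀ i, φ.Sat (shift w i)
  | .mrel φ ψ, w =>
      (¬ ∃ i, ¬ ψ.Sat (shift w i) ∧ ∀ j < i, ¬ φ.Sat (shift w j)) ∧ ∃ i, φ.Sat (shift w i)

/-- The set of subformulas of an LTL formula. -/
def LTL.SubF : LTL P → Set (LTL P)
  | .atom p => {.atom p}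
  | .lnot φ => insert (.lnot φ) φ.SubF
  | .land φ ψ => insert (.land φ ψ) (φ.SubF ∪ ψ.SubF)
  | .lor φ ψ => insert (.lor φ ψ) (φ.SubF ∪ ψ.SubF)
  | .limp φ ψ => insert (.limp φ ψ) (φ.SubF ∪ ψ.SubF)
  | .liff φ ψ => insert (.liff φ ψ) (φ.SubF ∪ ψ.SubF)
  | .next φ => insert (.next φ) φ.SubF
  | .fut φ => insert (.fut φ) φ.SubF
  | .glob φ => insert (.glob φ) φ.SubF
  | .untl φ ψ => insert (.untl φ ψ) (φ.SubF ∪ ψ.SubF)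
  | .rel φ ψ => insert (.rel φ ψ) (φ.SubF ∪ ψ.SubF)
  | .wuntl φ ψ => insert (.wuntl φ ψ) (φ.SubF ∪ ψ.SubF)
  | .mrel φ ψ => insert (.mrel φ ψ) (φ.SubF ∪ ψ.SubF)

/-- The size of an LTL formula: its number of (distinct) subformulas. -/
noncomputable def LTL.Sz (φ : LTL P) : ℕ := φ.SubF.ncard

/-- The set of atomic propositions occurring in a formula. -/
def LTL.props (φ : LTL P) : Set P := {p : P | LTL.atom p ∈ φ.SubF}

/-- A formula is temporal-free if no temporal operator occurs in it. -/
inductive LTL.TemporalFree : LTL P → Prop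
  | atom (p : P) : TemporalFree (.atom p)
  | lnot {φ : LTL P} : TemporalFree φ → TemporalFree (.lnot φ)
  | land {φ ψ : LTL P} : TemporalFree φ → TemporalFree ψ → TemporalFree (.land φ ψ)
  | lor {φ ψ : LTL P} : TemporalFree φ → TemporalFree ψ → TemporalFree (.lor φ ψ)
  | limp {φ ψ : LTL P} : TemporalFree φ → TemporalFree ψ → TemporalFree (.limp φ ψ)
  | liff {φ ψ : LTL P} : TemporalFree φ → TemporalFree ψ → TemporalFree (.liff φ ψ)

/-- Concise formulas: atoms, and binary combinations of concise formulas over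
disjoint sets of propositions. -/
inductive LTL.Concise : LTL P → Prop
  | atom (p : P) : Concise (.atom p)
  | land {φ ψ : LTL P} : Concise φ → Concise ψ → φ.props ∩ ψ.props = ∅ → Concise (.land φ ψ)
  | lor {φ ψ : LTL P} : Concise φ → Concise ψ → φ.props ∩ ψ.props = ∅ → Concise (.lor φ ψ)
  | limp {φ ψ : LTL P} : Concise φ → Concise ψ → φ.props ∩ ψ.props = ∅ → Concise (.limp φ ψ)
  | liff {φ ψ : LTL P} : Concise φ → Concise ψ → φ.props ∩ ψ.props = ∅ → Concise (.liff φ ψ)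
  | untl {φ ψ : LTL P} : Concise φ → Concise ψ → φ.props ∩ ψ.props = ∅ → Concise (.untl φ ψ)
  | rel {φ ψ : LTL P} : Concise φ → Concise ψ → φ.props ∩ ψ.props = ∅ → Concise (.rel φ ψ)
  | wuntl {φ ψ : LTL P} : Concise φ → Concise ψ → φ.props ∩ ψ.props = ∅ → Concise (.wuntl φ ψ)
  | mrel {φ ψ : LTL P} : Concise φ → Concise ψ → φ.props ∩ ψ.props = ∅ → Concise (.mrel φ ψ)

/-- Formulas in which the only binary operator occurring is `∨`. -/
inductive LTL.OnlyOrBin : LTL P → Prop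
  | atom (p : P) : OnlyOrBin (.atom p)
  | lnot {φ : LTL P} : OnlyOrBin φ → OnlyOrBin (.lnot φ)
  | lor {φ ψ : LTL P} : OnlyOrBin φ → OnlyOrBin ψ → OnlyOrBin (.lor φ ψ)
  | next {φ : LTL P} : OnlyOrBin φ → OnlyOrBin (.next φ)
  | fut {φ : LTL P} : OnlyOrBin φ → OnlyOrBin (.fut φ)
  | glob {φ : LTL P} : OnlyOrBin φ → OnlyOrBin (.glob φ)

/-- Formulas that are disjunctions of atomic propositions, built using only `∨`. -/
inductive LTL.OrOfAtoms : LTL P → Prop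
  | atom (p : P) : OrOfAtoms (.atom p)
  | lor {φ ψ : LTL P} : OrOfAtoms φ → OrOfAtoms ψ → OrOfAtoms (.lor φ ψ)

/- ### The 3-SAT reduction.
Variables `x_k` are indexed by `k < m`; the atomic proposition `(k, true)`
represents `x_k` and `(k, false)` represents `x̄_k`. -/

/-- A literal: a variable index together with its polarity. -/
abbrev Lit := ℕ × Bool

/-- A 3-clause. -/
abbrev Clause3 := Lit × Lit × Lit

/-- A literal holds under a valuation. -/
def litSat (v : ℕ → Bool) (l : Lit) : Prop := v l.1 = l.2

/-- A clause holds under a valuation. -/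
def clauseSat (v : ℕ → Bool) (c : Clause3) : Prop :=
  litSat v c.1 ∨ litSat v c.2.1 ∨ litSat v c.2.2

/-- A valuation satisfies a 3-CNF formula (a list of clauses). -/
def cnfSat (v : ℕ → Bool) (Φ : List Clause3) : Prop := ∀ c ∈ Φ, clauseSat v c

/-- All variables of the 3-CNF formula are among `x_0, …, x_{m-1}`. -/
def cnfVars (m : ℕ) (Φ : List Clause3) : Prop :=
  ∀ c ∈ Φ, c.1.1 < m ∧ c.2.1.1 < m ∧ c.2.2.1 < m

/-- The letter `C_i = {l̃₁, l̃₂, l̃₃}` associated with a clause. -/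
def clauseSet (c : Clause3) : Set Lit := {c.1, c.2.1, c.2.2}

/-- The pair `X_k = {x_k, x̄_k}` of propositions associated with variable `x_k`. -/
def rho (k : ℕ) : Set Lit := {(k, true), (k, false)}

/-- The set `𝒫` of positive words of the reduction. -/
def Pos (m : ℕ) (Φ : List Clause3) : Set (ℕ → Set Lit) :=
  {w | (∃ c ∈ Φ, w = constW (clauseSet c)) ∨ ∃ k < m, w = constW (rho k)}

/-- The negative word `η = ∅^ω`. -/
def negWord : ℕ → Set Lit := constW ∅

/-- `φ` separates `𝒫` and `𝒩 = {η}`. -/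
def Separates (m : ℕ) (Φ : List Clause3) (φ : LTL Lit) : Prop :=
  (∀ w ∈ Pos m Φ, φ.Sat w) ∧ ¬ φ.Sat negWord

/-- All propositions of `φ` are among `{x_k, x̄_k : k < m}`. -/
def propsInRange (m : ℕ) (φ : LTL Lit) : Prop := ∀ p ∈ φ.props, p.1 < m

/-- The disjunction `x_0^v ∨ x_1^v ∨ ⋯ ∨ x_{m-1}^v` (for `m ≥ 1`),
where `x_k^v` is the atom `(k, v k)`. -/
def vDisj (v : ℕ → Bool) : ℕ → LTL Lit
  | 0 => .atom (0, v 0)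
  | 1 => .atom (0, v 0)
  | (k + 2) => .lor (vDisj v (k + 1)) (.atom (k + 1, v (k + 1)))

/-- A formula is disjunctive on a set `I` of variable indices. -/
def DisjunctiveOn (I : Set ℕ) (φ : LTL Lit) : Prop :=
  φ.TemporalFree ∧ φ.Concise ∧ φ.OnlyOrBin ∧
    φ.props.ncard = I.ncard ∧ ∀ k ∈ I, (φ.props ∩ rho k).ncard = 1

/-- A formula is `I`-concise for a set `I` of variable indices. -/
def IConciseOn (I : Set ℕ) (φ : LTL Lit) : Prop :=
  φ.Concise ∧ φ.props.ncard = I.ncard ∧ ∀ k ∈ I, (φ.props ∩ rho k).ncard = 1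

/- ### CTL -/

/-- CTL (state) formulas over `P`; a quantified temporal subformula, e.g. `E(φ U ψ)`,
is a single constructor (`Bool` is the path quantifier: `true` = E, `false` = A). -/
inductive CTL (P : Type) : Type where
  | atom : P → CTL P
  | lnot : CTL P → CTL P
  | land : CTL P → CTL P → CTL P
  | lor : CTL P → CTL P → CTL P
  | limp : CTL P → CTL P → CTL P
  | liff : CTL P → CTL P → CTL P
  | qnext : Bool → CTL P → CTL P
  | qfut : Bool → CTL P → CTL P
  | qglob : Bool → CTL P → CTL P
  | quntl : Bool → CTL P → CTL P → CTL P
  | qrel : Bool → CTL P → CTL P → CTL P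
  | qwuntl : Bool → CTL P → CTL P → CTL P
  | qmrel : Bool → CTL P → CTL P → CTL P

/-- A Kripke structure over `P`. -/
structure Kripke (P : Type) where
  S : Type
  I : Set S
  R : S → S → Prop
  total : ∀ s : S, ∃ t : S, R s t
  L : S → Set P

/-- An infinite path of a Kripke structure. -/
def Kripke.IsPath (M : Kripke P) (π : ℕ → M.S) : Prop := ∀ i, M.R (π i) (π (i + 1))

/-- Path quantification: `q = true` is `E` (some path from `s`), `q = false` is `A`. -/
def Kripke.Q (M : Kripke P) (q : Bool) (s : M.S) (pred : (ℕ → M.S) → Prop) : Prop :=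
  if q then ∃ π : ℕ → M.S, M.IsPath π ∧ π 0 = s ∧ pred π
  else ∀ π : ℕ → M.S, M.IsPath π → π 0 = s → pred π

/-- CTL semantics at a state of a Kripke structure. -/
def CTL.Sat (M : Kripke P) : CTL P → M.S → Prop
  | .atom p, s => p ∈ M.L s
  | .lnot φ, s => ¬ φ.Sat M s
  | .land φ ψ, s => φ.Sat M s ∧ ψ.Sat M s
  | .lor φ ψ, s => φ.Sat M s ∨ ψ.Sat M s
  | .limp φ ψ, s => ¬ φ.Sat M s ∨ ψ.Sat M s
  | .liff φ ψ, s => (φ.Sat M s ∧ ψ.Sat M s) ∨ (¬ φ.Sat M s ∧ ¬ ψ.Sat M s)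
  | .qnext q φ, s => M.Q q s fun π => φ.Sat M (π 1)
  | .qfut q φ, s => M.Q q s fun π => ∃ i, φ.Sat M (π i)
  | .qglob q φ, s => M.Q q s fun π => ∀ i, φ.Sat M (π i)
  | .quntl q φ ψ, s => M.Q q s fun π => ∃ i, ψ.Sat M (π i) ∧ ∀ j < i, φ.Sat M (π j)
  | .qrel q φ ψ, s => M.Q q s fun π => ¬ ∃ i, ¬ ψ.Sat M (π i) ∧ ∀ j < i, ¬ φ.Sat M (π j)
  | .qwuntl q φ ψ, s => M.Q q s fun π =>
      (∃ i, ψ.Sat M (π i) ∧ ∀ j < i, φ.Sat M (π j)) ∨ ∀ i, φ.Sat M (π i)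
  | .qmrel q φ ψ, s => M.Q q s fun π =>
      (¬ ∃ i, ¬ ψ.Sat M (π i) ∧ ∀ j < i, ¬ φ.Sat M (π j)) ∧ ∃ i, φ.Sat M (π i)

/-- `M ⊨ φ`: the formula holds at every initial state. -/
def Kripke.Models (M : Kripke P) (φ : CTL P) : Prop := ∀ s ∈ M.I, φ.Sat M s

/-- The set of subformulas of a CTL formula (a quantified temporal subformula counts
as a single subformula together with the subformulas of its arguments). -/
def CTL.SubF : CTL P → Set (CTL P)
  | .atom p => {.atom p}
  | .lnot φ => insert (.lnot φ) φ.SubF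
  | .land φ ψ => insert (.land φ ψ) (φ.SubF ∪ ψ.SubF)
  | .lor φ ψ => insert (.lor φ ψ) (φ.SubF ∪ ψ.SubF)
  | .limp φ ψ => insert (.limp φ ψ) (φ.SubF ∪ ψ.SubF)
  | .liff φ ψ => insert (.liff φ ψ) (φ.SubF ∪ ψ.SubF)
  | .qnext q φ => insert (.qnext q φ) φ.SubF
  | .qfut q φ => insert (.qfut q φ) φ.SubF
  | .qglob q φ => insert (.qglob q φ) φ.SubF
  | .quntl q φ ψ => insert (.quntl q φ ψ) (φ.SubF ∪ ψ.SubF)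
  | .qrel q φ ψ => insert (.qrel q φ ψ) (φ.SubF ∪ ψ.SubF)
  | .qwuntl q φ ψ => insert (.qwuntl q φ ψ) (φ.SubF ∪ ψ.SubF)
  | .qmrel q φ ψ => insert (.qmrel q φ ψ) (φ.SubF ∪ ψ.SubF)

/-- The size of a CTL formula: its number of (distinct) subformulas. -/
noncomputable def CTL.Sz (φ : CTL P) : ℕ := φ.SubF.ncard

/-- `f_{CTL→LTL}`: erase all path quantifiers. -/
def CTL.toLTL : CTL P → LTL P
  | .atom p => .atom p
  | .lnot φ => .lnot φ.toLTL
  | .land φ ψ => .land φ.toLTL ψ.toLTL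
  | .lor φ ψ => .lor φ.toLTL ψ.toLTL
  | .limp φ ψ => .limp φ.toLTL ψ.toLTL
  | .liff φ ψ => .liff φ.toLTL ψ.toLTL
  | .qnext _ φ => .next φ.toLTL
  | .qfut _ φ => .fut φ.toLTL
  | .qglob _ φ => .glob φ.toLTL
  | .quntl _ φ ψ => .untl φ.toLTL ψ.toLTL
  | .qrel _ φ ψ => .rel φ.toLTL ψ.toLTL
  | .qwuntl _ φ ψ => .wuntl φ.toLTL ψ.toLTL
  | .qmrel _ φ ψ => .mrel φ.toLTL ψ.toLTL

/-- `f_{LTL→CTL}`: insert the quantifier `E` before every temporal operator. -/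
def LTL.toCTL : LTL P → CTL P
  | .atom p => .atom p
  | .lnot φ => .lnot φ.toCTL
  | .land φ ψ => .land φ.toCTL ψ.toCTL
  | .lor φ ψ => .lor φ.toCTL ψ.toCTL
  | .limp φ ψ => .limp φ.toCTL ψ.toCTL
  | .liff φ ψ => .liff φ.toCTL ψ.toCTL
  | .next φ => .qnext true φ.toCTL
  | .fut φ => .qfut true φ.toCTL
  | .glob φ => .qglob true φ.toCTL
  | .untl φ ψ => .quntl true φ.toCTL ψ.toCTL
  | .rel φ ψ => .qrel true φ.toCTL ψ.toCTL
  | .wuntl φ ψ => .qwuntl true φ.toCTL ψ.toCTL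
  | .mrel φ ψ => .qmrel true φ.toCTL ψ.toCTL

/-- The one-state Kripke structure `M_{α^ω}`. -/
def singleKripke (α : Set P) : Kripke P where
  S := Unit
  I := Set.univ
  R := fun _ _ => True
  total := fun s => ⟨s, trivial⟩
  L := fun _ => α


/-- Number of constructors of a formula. -/
def LTL.cnt : LTL P → ℕ
  | .atom _ => 1
  | .lnot φ => φ.cnt + 1
  | .next φ => φ.cnt + 1
  | .fut φ => φ.cnt + 1
  | .glob φ => φ.cnt + 1
  | .land φ ψ => φ.cnt + ψ.cnt + 1
  | .lor φ ψ => φ.cnt + ψ.cnt + 1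
  | .limp φ ψ => φ.cnt + ψ.cnt + 1
  | .liff φ ψ => φ.cnt + ψ.cnt + 1
  | .untl φ ψ => φ.cnt + ψ.cnt + 1
  | .rel φ ψ => φ.cnt + ψ.cnt + 1
  | .wuntl φ ψ => φ.cnt + ψ.cnt + 1
  | .mrel φ ψ => φ.cnt + ψ.cnt + 1

lemma LTL.mem_subF_self (φ : LTL P) : φ ∈ φ.SubF := by
  cases φ <;> simp [LTL.SubF]

lemma LTL.subF_finite (φ : LTL P) : φ.SubF.Finite := by
  induction φ with
  | atom p => exact Set.finite_singleton _
  | lnot φ ih => exact ih.insert _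
  | next φ ih => exact ih.insert _
  | fut φ ih => exact ih.insert _
  | glob φ ih => exact ih.insert _
  | land φ ψ ih1 ih2 => exact (ih1.union ih2).insert _
  | lor φ ψ ih1 ih2 => exact (ih1.union ih2).insert _
  | limp φ ψ ih1 ih2 => exact (ih1.union ih2).insert _
  | liff φ ψ ih1 ih2 => exact (ih1.union ih2).insert _
  | untl φ ψ ih1 ih2 => exact (ih1.union ih2).insert _
  | rel φ ψ ih1 ih2 => exact (ih1.union ih2).insert _
  | wuntl φ ψ ih1 ih2 => exact (ih1.union ih2).insert _
  | mrel φ ψ ih1 ih2 => exact (ih1.union ih2).insert _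

lemma LTL.cnt_le (φ : LTL P) : ∀ ψ ∈ φ.SubF, ψ.cnt ≤ φ.cnt := by
  induction φ with
  | atom p =>
      intro χ h
      simp only [LTL.SubF, Set.mem_singleton_iff] at h
      subst h; exact le_rfl
  | lnot φ ih =>
      intro χ h
      simp only [LTL.SubF, Set.mem_insert_iff] at h
      rcases h with rfl | h
      · exact le_rfl
      · have := ih χ h; simp only [LTL.cnt]; omega
  | next φ ih =>
      intro χ h
      simp only [LTL.SubF, Set.mem_insert_iff] at h
      rcases h with rfl | h
      · exact le_rfl
      · have := ih χ h; simp only [LTL.cnt]; omega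
  | fut φ ih =>
      intro χ h
      simp only [LTL.SubF, Set.mem_insert_iff] at h
      rcases h with rfl | h
      · exact le_rfl
      · have := ih χ h; simp only [LTL.cnt]; omega
  | glob φ ih =>
      intro χ h
      simp only [LTL.SubF, Set.mem_insert_iff] at h
      rcases h with rfl | h
      · exact le_rfl
      · have := ih χ h; simp only [LTL.cnt]; omega
  | land φ ψ ih1 ih2 =>
      intro χ h
      simp only [LTL.SubF, Set.mem_insert_iff, Set.mem_union] at h
      rcases h with rfl | h | h
      · exact le_rfl
      · have := ih1 χ h; simp only [LTL.cnt]; omega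
      · have := ih2 χ h; simp only [LTL.cnt]; omega
  | lor φ ψ ih1 ih2 =>
      intro χ h
      simp only [LTL.SubF, Set.mem_insert_iff, Set.mem_union] at h
      rcases h with rfl | h | h
      · exact le_rfl
      · have := ih1 χ h; simp only [LTL.cnt]; omega
      · have := ih2 χ h; simp only [LTL.cnt]; omega
  | limp φ ψ ih1 ih2 =>
      intro χ h
      simp only [LTL.SubF, Set.mem_insert_iff, Set.mem_union] at h
      rcases h with rfl | h | h
      · exact le_rfl
      · have := ih1 χ h; simp only [LTL.cnt]; omega
      · have := ih2 χ h; simp only [LTL.cnt]; omega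
  | liff φ ψ ih1 ih2 =>
      intro χ h
      simp only [LTL.SubF, Set.mem_insert_iff, Set.mem_union] at h
      rcases h with rfl | h | h
      · exact le_rfl
      · have := ih1 χ h; simp only [LTL.cnt]; omega
      · have := ih2 χ h; simp only [LTL.cnt]; omega
  | untl φ ψ ih1 ih2 =>
      intro χ h
      simp only [LTL.SubF, Set.mem_insert_iff, Set.mem_union] at h
      rcases h with rfl | h | h
      · exact le_rfl
      · have := ih1 χ h; simp only [LTL.cnt]; omega
      · have := ih2 χ h; simp only [LTL.cnt]; omega
  | rel φ ψ ih1 ih2 =>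
      intro χ h
      simp only [LTL.SubF, Set.mem_insert_iff, Set.mem_union] at h
      rcases h with rfl | h | h
      · exact le_rfl
      · have := ih1 χ h; simp only [LTL.cnt]; omega
      · have := ih2 χ h; simp only [LTL.cnt]; omega
  | wuntl φ ψ ih1 ih2 =>
      intro χ h
      simp only [LTL.SubF, Set.mem_insert_iff, Set.mem_union] at h
      rcases h with rfl | h | h
      · exact le_rfl
      · have := ih1 χ h; simp only [LTL.cnt]; omega
      · have := ih2 χ h; simp only [LTL.cnt]; omega
  | mrel φ ψ ih1 ih2 =>
      intro χ h
      simp only [LTL.SubF, Set.mem_insert_iff, Set.mem_union] at h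
      rcases h with rfl | h | h
      · exact le_rfl
      · have := ih1 χ h; simp only [LTL.cnt]; omega
      · have := ih2 χ h; simp only [LTL.cnt]; omega

lemma LTL.not_mem_of_cnt_lt {φ χ : LTL P} (h : φ.cnt < χ.cnt) : χ ∉ φ.SubF :=
  fun hm => absurd (LTL.cnt_le φ χ hm) (by omega)

lemma LTL.subF_trans (φ : LTL P) : ∀ ψ ∈ φ.SubF, ψ.SubF ⊆ φ.SubF := by
  induction φ with
  | atom p =>
      intro χ h
      simp only [LTL.SubF, Set.mem_singleton_iff] at h
      subst h; exact subset_rfl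
  | lnot φ ih =>
      intro χ h
      simp only [LTL.SubF, Set.mem_insert_iff] at h
      rcases h with rfl | h
      · exact subset_rfl
      · exact (ih χ h).trans (Set.subset_insert _ _)
  | next φ ih =>
      intro χ h
      simp only [LTL.SubF, Set.mem_insert_iff] at h
      rcases h with rfl | h
      · exact subset_rfl
      · exact (ih χ h).trans (Set.subset_insert _ _)
  | fut φ ih =>
      intro χ h
      simp only [LTL.SubF, Set.mem_insert_iff] at h
      rcases h with rfl | h
      · exact subset_rfl
      · exact (ih χ h).trans (Set.subset_insert _ _)
  | glob φ ih =>
      intro χ h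
      simp only [LTL.SubF, Set.mem_insert_iff] at h
      rcases h with rfl | h
      · exact subset_rfl
      · exact (ih χ h).trans (Set.subset_insert _ _)
  | land φ ψ ih1 ih2 =>
      intro χ h
      simp only [LTL.SubF, Set.mem_insert_iff, Set.mem_union] at h
      rcases h with rfl | h | h
      · exact subset_rfl
      · exact (ih1 χ h).trans (Set.subset_union_left.trans (Set.subset_insert _ _))
      · exact (ih2 χ h).trans (Set.subset_union_right.trans (Set.subset_insert _ _))
  | lor φ ψ ih1 ih2 =>
      intro χ h
      simp only [LTL.SubF, Set.mem_insert_iff, Set.mem_union] at h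
      rcases h with rfl | h | h
      · exact subset_rfl
      · exact (ih1 χ h).trans (Set.subset_union_left.trans (Set.subset_insert _ _))
      · exact (ih2 χ h).trans (Set.subset_union_right.trans (Set.subset_insert _ _))
  | limp φ ψ ih1 ih2 =>
      intro χ h
      simp only [LTL.SubF, Set.mem_insert_iff, Set.mem_union] at h
      rcases h with rfl | h | h
      · exact subset_rfl
      · exact (ih1 χ h).trans (Set.subset_union_left.trans (Set.subset_insert _ _))
      · exact (ih2 χ h).trans (Set.subset_union_right.trans (Set.subset_insert _ _))
  | liff φ ψ ih1 ih2 =>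
      intro χ h
      simp only [LTL.SubF, Set.mem_insert_iff, Set.mem_union] at h
      rcases h with rfl | h | h
      · exact subset_rfl
      · exact (ih1 χ h).trans (Set.subset_union_left.trans (Set.subset_insert _ _))
      · exact (ih2 χ h).trans (Set.subset_union_right.trans (Set.subset_insert _ _))
  | untl φ ψ ih1 ih2 =>
      intro χ h
      simp only [LTL.SubF, Set.mem_insert_iff, Set.mem_union] at h
      rcases h with rfl | h | h
      · exact subset_rfl
      · exact (ih1 χ h).trans (Set.subset_union_left.trans (Set.subset_insert _ _))
      · exact (ih2 χ h).trans (Set.subset_union_right.trans (Set.subset_insert _ _))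
  | rel φ ψ ih1 ih2 =>
      intro χ h
      simp only [LTL.SubF, Set.mem_insert_iff, Set.mem_union] at h
      rcases h with rfl | h | h
      · exact subset_rfl
      · exact (ih1 χ h).trans (Set.subset_union_left.trans (Set.subset_insert _ _))
      · exact (ih2 χ h).trans (Set.subset_union_right.trans (Set.subset_insert _ _))
  | wuntl φ ψ ih1 ih2 =>
      intro χ h
      simp only [LTL.SubF, Set.mem_insert_iff, Set.mem_union] at h
      rcases h with rfl | h | h
      · exact subset_rfl
      · exact (ih1 χ h).trans (Set.subset_union_left.trans (Set.subset_insert _ _))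
      · exact (ih2 χ h).trans (Set.subset_union_right.trans (Set.subset_insert _ _))
  | mrel φ ψ ih1 ih2 =>
      intro χ h
      simp only [LTL.SubF, Set.mem_insert_iff, Set.mem_union] at h
      rcases h with rfl | h | h
      · exact subset_rfl
      · exact (ih1 χ h).trans (Set.subset_union_left.trans (Set.subset_insert _ _))
      · exact (ih2 χ h).trans (Set.subset_union_right.trans (Set.subset_insert _ _))

lemma LTL.props_mono {φ ψ : LTL P} (h : ψ ∈ φ.SubF) : ψ.props ⊆ φ.props :=
  fun _ hp => LTL.subF_trans φ ψ h hp

lemma LTL.props_atom (p : P) : (LTL.atom p : LTL P).props = {p} := by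
  ext q; simp [LTL.props, LTL.SubF]

lemma LTL.props_lnot (φ : LTL P) : (LTL.lnot φ).props = φ.props := by
  ext q; simp [LTL.props, LTL.SubF]

lemma LTL.props_next (φ : LTL P) : (LTL.next φ).props = φ.props := by
  ext q; simp [LTL.props, LTL.SubF]

lemma LTL.props_fut (φ : LTL P) : (LTL.fut φ).props = φ.props := by
  ext q; simp [LTL.props, LTL.SubF]

lemma LTL.props_glob (φ : LTL P) : (LTL.glob φ).props = φ.props := by
  ext q; simp [LTL.props, LTL.SubF]

lemma LTL.props_land (φ ψ : LTL P) : (LTL.land φ ψ).props = φ.props ∪ ψ.props := by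
  ext q; simp [LTL.props, LTL.SubF]

lemma LTL.props_lor (φ ψ : LTL P) : (LTL.lor φ ψ).props = φ.props ∪ ψ.props := by
  ext q; simp [LTL.props, LTL.SubF]

lemma LTL.props_limp (φ ψ : LTL P) : (LTL.limp φ ψ).props = φ.props ∪ ψ.props := by
  ext q; simp [LTL.props, LTL.SubF]

lemma LTL.props_liff (φ ψ : LTL P) : (LTL.liff φ ψ).props = φ.props ∪ ψ.props := by
  ext q; simp [LTL.props, LTL.SubF]

lemma LTL.props_untl (φ ψ : LTL P) : (LTL.untl φ ψ).props = φ.props ∪ ψ.props := by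
  ext q; simp [LTL.props, LTL.SubF]

lemma LTL.props_rel (φ ψ : LTL P) : (LTL.rel φ ψ).props = φ.props ∪ ψ.props := by
  ext q; simp [LTL.props, LTL.SubF]

lemma LTL.props_wuntl (φ ψ : LTL P) : (LTL.wuntl φ ψ).props = φ.props ∪ ψ.props := by
  ext q; simp [LTL.props, LTL.SubF]

lemma LTL.props_mrel (φ ψ : LTL P) : (LTL.mrel φ ψ).props = φ.props ∪ ψ.props := by
  ext q; simp [LTL.props, LTL.SubF]


/-- The set of subformulas of `φ` touching `Y`. -/
def touch (φ : LTL P) (Y : Set P) : Set (LTL P) := {ψ ∈ φ.SubF | (Y ∩ ψ.props).Nonempty}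

lemma touch_finite (φ : LTL P) (Y : Set P) : (touch φ Y).Finite :=
  (LTL.subF_finite φ).subset fun _ h => h.1

lemma touch_ncard_mono {φ χ : LTL P} (h : φ.SubF ⊆ χ.SubF) (Y : Set P) :
    (touch φ Y).ncard ≤ (touch χ Y).ncard :=
  Set.ncard_le_ncard (fun ψ hψ => ⟨h hψ.1, hψ.2⟩) (touch_finite χ Y)

lemma touch_ncard_mono' {φ χ : LTL P} (h : φ.SubF ⊆ χ.SubF) {Y Y' : Set P} (hY : Y ⊆ Y') :
    (touch φ Y).ncard ≤ (touch χ Y').ncard :=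
  Set.ncard_le_ncard (fun ψ hψ => ⟨h hψ.1, hψ.2.mono (Set.inter_subset_inter_left _ hY)⟩)
    (touch_finite χ Y')

lemma combine (top φ1 φ2 : LTL P) (Y Y1 Y2 : Set P)
    (hS1 : φ1.SubF ⊆ top.SubF) (hS2 : φ2.SubF ⊆ top.SubF)
    (ht1 : top ∉ φ1.SubF) (ht2 : top ∉ φ2.SubF)
    (hY1 : Y1 ⊆ Y) (hY2 : Y2 ⊆ Y)
    (hdis : Y2 ∩ φ1.props = ∅)
    (htopY : (Y ∩ top.props).Nonempty) :
    (touch φ1 Y1).ncard + (touch φ2 Y2).ncard + 1 ≤ (touch top Y).ncard := by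
  have hf1 : (touch φ1 Y1).Finite := touch_finite φ1 Y1
  have hf2 : (touch φ2 Y2).Finite := touch_finite φ2 Y2
  have hdisj : Disjoint (touch φ1 Y1) (touch φ2 Y2) := by
    rw [Set.disjoint_left]
    rintro ψ ⟨hm1, -⟩ ⟨hm2, p, hp1, hp2⟩
    have : p ∈ Y2 ∩ φ1.props := ⟨hp1, LTL.props_mono hm1 hp2⟩
    rw [hdis] at this
    exact this
  have hnot : top ∉ touch φ1 Y1 ∪ touch φ2 Y2 := by
    rintro (⟨h, -⟩ | ⟨h, -⟩)
    · exact ht1 h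
    · exact ht2 h
  have hsub : insert top (touch φ1 Y1 ∪ touch φ2 Y2) ⊆ touch top Y := by
    rintro ψ (rfl | ⟨hm, hn⟩ | ⟨hm, hn⟩)
    · exact ⟨LTL.mem_subF_self _, htopY⟩
    · exact ⟨hS1 hm, hn.mono (Set.inter_subset_inter_left _ hY1)⟩
    · exact ⟨hS2 hm, hn.mono (Set.inter_subset_inter_left _ hY2)⟩
  have h1 : (insert top (touch φ1 Y1 ∪ touch φ2 Y2)).ncard
      = (touch φ1 Y1).ncard + (touch φ2 Y2).ncard + 1 := by
    rw [Set.ncard_insert_of_notMem hnot (hf1.union hf2),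
        Set.ncard_union_eq hdisj hf1 hf2]
  calc (touch φ1 Y1).ncard + (touch φ2 Y2).ncard + 1
      = (insert top (touch φ1 Y1 ∪ touch φ2 Y2)).ncard := h1.symm
    _ ≤ (touch top Y).ncard := Set.ncard_le_ncard hsub (touch_finite top Y)

lemma claimA_un (φ top : LTL P) (hS : φ.SubF ⊆ top.SubF) (hP : top.props = φ.props)
    (ih : ∀ Y : Set P, Y.Finite → Y.Nonempty → Y ⊆ φ.props →
      2 * Y.ncard ≤ (touch φ Y).ncard + 1)
    (Y : Set P) (hf : Y.Finite) (hne : Y.Nonempty) (hsub : Y ⊆ top.props) :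
    2 * Y.ncard ≤ (touch top Y).ncard + 1 := by
  rw [hP] at hsub
  exact (ih Y hf hne hsub).trans (by have := touch_ncard_mono hS Y; omega)

lemma claimA_bin (φ1 φ2 top : LTL P)
    (hS1 : φ1.SubF ⊆ top.SubF) (hS2 : φ2.SubF ⊆ top.SubF)
    (ht1 : top ∉ φ1.SubF) (ht2 : top ∉ φ2.SubF)
    (hP : top.props = φ1.props ∪ φ2.props)
    (ih1 : ∀ Y : Set P, Y.Finite → Y.Nonempty → Y ⊆ φ1.props →
      2 * Y.ncard ≤ (touch φ1 Y).ncard + 1)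
    (ih2 : ∀ Y : Set P, Y.Finite → Y.Nonempty → Y ⊆ φ2.props →
      2 * Y.ncard ≤ (touch φ2 Y).ncard + 1)
    (Y : Set P) (hf : Y.Finite) (hne : Y.Nonempty) (hsub : Y ⊆ top.props) :
    2 * Y.ncard ≤ (touch top Y).ncard + 1 := by
  set Y1 := Y ∩ φ1.props with hY1def
  set Y2 := Y \ φ1.props with hY2def
  have hsplit : Y1.ncard + Y2.ncard = Y.ncard :=
    Set.ncard_inter_add_ncard_diff_eq_ncard Y φ1.props hf
  rw [hP] at hsub
  rcases Set.eq_empty_or_nonempty Y2 with h2 | h2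
  · have hYsub : Y ⊆ φ1.props := by
      intro p hp
      by_contra hc
      exact absurd (show p ∈ (∅ : Set P) by rw [← h2]; exact ⟨hp, hc⟩) (Set.notMem_empty p)
    exact (ih1 Y hf hne hYsub).trans (by have := touch_ncard_mono hS1 Y; omega)
  rcases Set.eq_empty_or_nonempty Y1 with h1 | h1
  · have hYsub : Y ⊆ φ2.props := by
      intro p hp
      rcases hsub hp with h | h
      · exact absurd (show p ∈ (∅ : Set P) by rw [← h1]; exact ⟨hp, h⟩) (Set.notMem_empty p)
      · exact h
    exact (ih2 Y hf hne hYsub).trans (by have := touch_ncard_mono hS2 Y; omega)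
  · have hA1 := ih1 Y1 (hf.inter_of_left _) h1 Set.inter_subset_right
    have hY2sub : Y2 ⊆ φ2.props := by
      intro p hp
      rcases hsub hp.1 with h | h
      · exact absurd h hp.2
      · exact h
    have hA2 := ih2 Y2 hf.diff h2 hY2sub
    have hdis : Y2 ∩ φ1.props = ∅ := by
      ext p; simp only [Set.mem_inter_iff, Set.mem_empty_iff_false, iff_false, not_and]
      exact fun hp => hp.2
    have htopY : (Y ∩ top.props).Nonempty := by
      obtain ⟨q, hq⟩ := hne
      exact ⟨q, hq, hP ▸ hsub hq⟩
    have hc := combine top φ1 φ2 Y Y1 Y2 hS1 hS2 ht1 ht2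
      Set.inter_subset_left Set.diff_subset hdis htopY
    omega

lemma claimA (φ : LTL P) : ∀ Y : Set P, Y.Finite → Y.Nonempty → Y ⊆ φ.props →
    2 * Y.ncard ≤ (touch φ Y).ncard + 1 := by
  induction φ with
  | atom p =>
      intro Y hf hne hsub
      rw [LTL.props_atom] at hsub
      have hY : Y = {p} := (Set.Nonempty.subset_singleton_iff hne).mp hsub
      subst hY
      have hmem : LTL.atom p ∈ touch (LTL.atom p) ({p} : Set P) := by
        refine ⟨LTL.mem_subF_self _, ?_⟩
        rw [LTL.props_atom]
        exact ⟨p, rfl, rfl⟩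
      have : 0 < (touch (LTL.atom p) ({p} : Set P)).ncard :=
        (Set.ncard_pos (touch_finite _ _)).mpr ⟨_, hmem⟩
      rw [Set.ncard_singleton]
      omega
  | lnot φ ih =>
      exact claimA_un φ _ (Set.subset_insert _ _) (LTL.props_lnot φ) ih
  | next φ ih =>
      exact claimA_un φ _ (Set.subset_insert _ _) (LTL.props_next φ) ih
  | fut φ ih =>
      exact claimA_un φ _ (Set.subset_insert _ _) (LTL.props_fut φ) ih
  | glob φ ih =>
      exact claimA_un φ _ (Set.subset_insert _ _) (LTL.props_glob φ) ih
  | land φ ψ ih1 ih2 =>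
      exact claimA_bin φ ψ _
        (Set.subset_union_left.trans (Set.subset_insert _ _))
        (Set.subset_union_right.trans (Set.subset_insert _ _))
        (LTL.not_mem_of_cnt_lt (by simp only [LTL.cnt]; omega))
        (LTL.not_mem_of_cnt_lt (by simp only [LTL.cnt]; omega))
        (LTL.props_land φ ψ) ih1 ih2
  | lor φ ψ ih1 ih2 =>
      exact claimA_bin φ ψ _
        (Set.subset_union_left.trans (Set.subset_insert _ _))
        (Set.subset_union_right.trans (Set.subset_insert _ _))
        (LTL.not_mem_of_cnt_lt (by simp only [LTL.cnt]; omega))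
        (LTL.not_mem_of_cnt_lt (by simp only [LTL.cnt]; omega))
        (LTL.props_lor φ ψ) ih1 ih2
  | limp φ ψ ih1 ih2 =>
      exact claimA_bin φ ψ _
        (Set.subset_union_left.trans (Set.subset_insert _ _))
        (Set.subset_union_right.trans (Set.subset_insert _ _))
        (LTL.not_mem_of_cnt_lt (by simp only [LTL.cnt]; omega))
        (LTL.not_mem_of_cnt_lt (by simp only [LTL.cnt]; omega))
        (LTL.props_limp φ ψ) ih1 ih2
  | liff φ ψ ih1 ih2 =>
      exact claimA_bin φ ψ _
        (Set.subset_union_left.trans (Set.subset_insert _ _))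
        (Set.subset_union_right.trans (Set.subset_insert _ _))
        (LTL.not_mem_of_cnt_lt (by simp only [LTL.cnt]; omega))
        (LTL.not_mem_of_cnt_lt (by simp only [LTL.cnt]; omega))
        (LTL.props_liff φ ψ) ih1 ih2
  | untl φ ψ ih1 ih2 =>
      exact claimA_bin φ ψ _
        (Set.subset_union_left.trans (Set.subset_insert _ _))
        (Set.subset_union_right.trans (Set.subset_insert _ _))
        (LTL.not_mem_of_cnt_lt (by simp only [LTL.cnt]; omega))
        (LTL.not_mem_of_cnt_lt (by simp only [LTL.cnt]; omega))
        (LTL.props_untl φ ψ) ih1 ih2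
  | rel φ ψ ih1 ih2 =>
      exact claimA_bin φ ψ _
        (Set.subset_union_left.trans (Set.subset_insert _ _))
        (Set.subset_union_right.trans (Set.subset_insert _ _))
        (LTL.not_mem_of_cnt_lt (by simp only [LTL.cnt]; omega))
        (LTL.not_mem_of_cnt_lt (by simp only [LTL.cnt]; omega))
        (LTL.props_rel φ ψ) ih1 ih2
  | wuntl φ ψ ih1 ih2 =>
      exact claimA_bin φ ψ _
        (Set.subset_union_left.trans (Set.subset_insert _ _))
        (Set.subset_union_right.trans (Set.subset_insert _ _))
        (LTL.not_mem_of_cnt_lt (by simp only [LTL.cnt]; omega))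
        (LTL.not_mem_of_cnt_lt (by simp only [LTL.cnt]; omega))
        (LTL.props_wuntl φ ψ) ih1 ih2
  | mrel φ ψ ih1 ih2 =>
      exact claimA_bin φ ψ _
        (Set.subset_union_left.trans (Set.subset_insert _ _))
        (Set.subset_union_right.trans (Set.subset_insert _ _))
        (LTL.not_mem_of_cnt_lt (by simp only [LTL.cnt]; omega))
        (LTL.not_mem_of_cnt_lt (by simp only [LTL.cnt]; omega))
        (LTL.props_mrel φ ψ) ih1 ih2

lemma claimB_bin (φ1 φ2 top : LTL P)
    (hS1 : φ1.SubF ⊆ top.SubF) (hS2 : φ2.SubF ⊆ top.SubF)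
    (ht1 : top ∉ φ1.SubF) (ht2 : top ∉ φ2.SubF)
    (hP : top.props = φ1.props ∪ φ2.props)
    (ih1 : ∀ Y : Set P, Y.Finite → Y ⊂ φ1.props → 2 * Y.ncard ≤ (touch φ1 Y).ncard)
    (ih2 : ∀ Y : Set P, Y.Finite → Y ⊂ φ2.props → 2 * Y.ncard ≤ (touch φ2 Y).ncard)
    (Y : Set P) (hf : Y.Finite) (hsub : Y ⊂ top.props) :
    2 * Y.ncard ≤ (touch top Y).ncard := by
  rcases Set.eq_empty_or_nonempty Y with rfl | hne
  · simp
  obtain ⟨p, hpP, hpY⟩ := Set.exists_of_ssubset hsub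
  have hsub' : Y ⊆ φ1.props ∪ φ2.props := hP ▸ hsub.subset
  have htopY : (Y ∩ top.props).Nonempty :=
    ⟨hne.choose, hne.choose_spec, hsub.subset hne.choose_spec⟩
  rw [hP] at hpP
  set Y1 := Y ∩ φ1.props with hY1def
  set Y2 := Y \ φ1.props with hY2def
  have hsplit : Y1.ncard + Y2.ncard = Y.ncard :=
    Set.ncard_inter_add_ncard_diff_eq_ncard Y φ1.props hf
  have hdis : Y2 ∩ φ1.props = ∅ := by
    ext q; simp only [Set.mem_inter_iff, Set.mem_empty_iff_false, iff_false, not_and]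
    exact fun hq => hq.2
  have hY2sub : Y2 ⊆ φ2.props := by
    intro q hq
    rcases hsub' hq.1 with h | h
    · exact absurd h hq.2
    · exact h
  by_cases hp1 : p ∈ φ1.props
  · -- Y1 ⊊ props φ1
    have hss1 : Y1 ⊂ φ1.props := by
      refine ⟨Set.inter_subset_right, fun hc => hpY ?_⟩
      exact (hc hp1).1
    rcases Set.eq_empty_or_nonempty Y2 with h2 | h2
    · have hYeq : Y1 = Y := by
        apply Set.inter_eq_left.mpr
        intro q hq
        by_contra hc
        exact absurd (show q ∈ (∅ : Set P) by rw [← h2]; exact ⟨hq, hc⟩) (Set.notMem_empty q)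
      have := ih1 Y1 (hf.inter_of_left _) hss1
      rw [hYeq] at this
      exact this.trans (touch_ncard_mono hS1 Y)
    · have hB1 := ih1 Y1 (hf.inter_of_left _) hss1
      have hA2 := claimA φ2 Y2 hf.diff h2 hY2sub
      have hc := combine top φ1 φ2 Y Y1 Y2 hS1 hS2 ht1 ht2
        Set.inter_subset_left Set.diff_subset hdis htopY
      omega
  · -- p ∈ props φ2, Y2 ⊊ props φ2
    have hp2 : p ∈ φ2.props := by
      rcases hpP with h | h
      · exact absurd h hp1
      · exact h
    have hss2 : Y2 ⊂ φ2.props := by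
      refine ⟨hY2sub, fun hc => hpY ?_⟩
      exact (hc hp2).1
    rcases Set.eq_empty_or_nonempty Y1 with h1 | h1
    · have hYeq : Y2 = Y := by
        ext q
        constructor
        · exact fun hq => hq.1
        · intro hq
          exact ⟨hq, fun hc => (Set.notMem_empty q) (show q ∈ (∅ : Set P) by rw [← h1]; exact ⟨hq, hc⟩)⟩
      have := ih2 Y2 hf.diff hss2
      rw [hYeq] at this
      exact this.trans (touch_ncard_mono hS2 Y)
    · have hA1 := claimA φ1 Y1 (hf.inter_of_left _) h1 Set.inter_subset_right
      have hB2 := ih2 Y2 hf.diff hss2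
      have hc := combine top φ1 φ2 Y Y1 Y2 hS1 hS2 ht1 ht2
        Set.inter_subset_left Set.diff_subset hdis htopY
      omega

lemma claimB (φ : LTL P) : ∀ Y : Set P, Y.Finite → Y ⊂ φ.props →
    2 * Y.ncard ≤ (touch φ Y).ncard := by
  induction φ with
  | atom p =>
      intro Y hf hsub
      rw [LTL.props_atom] at hsub
      have : Y = ∅ := Set.ssubset_singleton_iff.mp hsub
      simp [this]
  | lnot φ ih =>
      intro Y hf hsub
      rw [LTL.props_lnot] at hsub
      exact (ih Y hf hsub).trans (touch_ncard_mono (Set.subset_insert _ _) Y)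
  | next φ ih =>
      intro Y hf hsub
      rw [LTL.props_next] at hsub
      exact (ih Y hf hsub).trans (touch_ncard_mono (Set.subset_insert _ _) Y)
  | fut φ ih =>
      intro Y hf hsub
      rw [LTL.props_fut] at hsub
      exact (ih Y hf hsub).trans (touch_ncard_mono (Set.subset_insert _ _) Y)
  | glob φ ih =>
      intro Y hf hsub
      rw [LTL.props_glob] at hsub
      exact (ih Y hf hsub).trans (touch_ncard_mono (Set.subset_insert _ _) Y)
  | land φ ψ ih1 ih2 =>
      exact claimB_bin φ ψ _
        (Set.subset_union_left.trans (Set.subset_insert _ _))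
        (Set.subset_union_right.trans (Set.subset_insert _ _))
        (LTL.not_mem_of_cnt_lt (by simp only [LTL.cnt]; omega))
        (LTL.not_mem_of_cnt_lt (by simp only [LTL.cnt]; omega))
        (LTL.props_land φ ψ) ih1 ih2
  | lor φ ψ ih1 ih2 =>
      exact claimB_bin φ ψ _
        (Set.subset_union_left.trans (Set.subset_insert _ _))
        (Set.subset_union_right.trans (Set.subset_insert _ _))
        (LTL.not_mem_of_cnt_lt (by simp only [LTL.cnt]; omega))
        (LTL.not_mem_of_cnt_lt (by simp only [LTL.cnt]; omega))
        (LTL.props_lor φ ψ) ih1 ih2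
  | limp φ ψ ih1 ih2 =>
      exact claimB_bin φ ψ _
        (Set.subset_union_left.trans (Set.subset_insert _ _))
        (Set.subset_union_right.trans (Set.subset_insert _ _))
        (LTL.not_mem_of_cnt_lt (by simp only [LTL.cnt]; omega))
        (LTL.not_mem_of_cnt_lt (by simp only [LTL.cnt]; omega))
        (LTL.props_limp φ ψ) ih1 ih2
  | liff φ ψ ih1 ih2 =>
      exact claimB_bin φ ψ _
        (Set.subset_union_left.trans (Set.subset_insert _ _))
        (Set.subset_union_right.trans (Set.subset_insert _ _))
        (LTL.not_mem_of_cnt_lt (by simp only [LTL.cnt]; omega))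
        (LTL.not_mem_of_cnt_lt (by simp only [LTL.cnt]; omega))
        (LTL.props_liff φ ψ) ih1 ih2
  | untl φ ψ ih1 ih2 =>
      exact claimB_bin φ ψ _
        (Set.subset_union_left.trans (Set.subset_insert _ _))
        (Set.subset_union_right.trans (Set.subset_insert _ _))
        (LTL.not_mem_of_cnt_lt (by simp only [LTL.cnt]; omega))
        (LTL.not_mem_of_cnt_lt (by simp only [LTL.cnt]; omega))
        (LTL.props_untl φ ψ) ih1 ih2
  | rel φ ψ ih1 ih2 =>
      exact claimB_bin φ ψ _
        (Set.subset_union_left.trans (Set.subset_insert _ _))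
        (Set.subset_union_right.trans (Set.subset_insert _ _))
        (LTL.not_mem_of_cnt_lt (by simp only [LTL.cnt]; omega))
        (LTL.not_mem_of_cnt_lt (by simp only [LTL.cnt]; omega))
        (LTL.props_rel φ ψ) ih1 ih2
  | wuntl φ ψ ih1 ih2 =>
      exact claimB_bin φ ψ _
        (Set.subset_union_left.trans (Set.subset_insert _ _))
        (Set.subset_union_right.trans (Set.subset_insert _ _))
        (LTL.not_mem_of_cnt_lt (by simp only [LTL.cnt]; omega))
        (LTL.not_mem_of_cnt_lt (by simp only [LTL.cnt]; omega))
        (LTL.props_wuntl φ ψ) ih1 ih2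
  | mrel φ ψ ih1 ih2 =>
      exact claimB_bin φ ψ _
        (Set.subset_union_left.trans (Set.subset_insert _ _))
        (Set.subset_union_right.trans (Set.subset_insert _ _))
        (LTL.not_mem_of_cnt_lt (by simp only [LTL.cnt]; omega))
        (LTL.not_mem_of_cnt_lt (by simp only [LTL.cnt]; omega))
        (LTL.props_mrel φ ψ) ih1 ih2


/-- if `Y ⊊ Prop(φ)`, at least `2|Y|` subformulas of `φ` contain a
proposition of `Y`. -/
theorem subformulas_lower_bound_strict (P : Type) (φ : LTL P) (Y : Set P)
    (hY : Y.Finite) (hsub : Y ⊂ φ.props) :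
    2 * Y.ncard ≤ {ψ ∈ φ.SubF | (Y ∩ ψ.props).Nonempty}.ncard := by
  exact claimB φ Y hY hsub

end Temporal
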